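/- For every source vertex s ∈ V there exists a spanning tree T of G (hence a subgraph with exactly n−1 edges) such that σ_T(s,t) ≤ 3·σ_G(s,t) for every vertex t ∈ V, i.e., a single-source group Steiner tree spanner with source s and stretch 3. -/

import Mathlib

open SimpleGraph ENNReal

set_option linter.unusedSectionVars false
set_option linter.unusedVariables false
set_option maxHeartbeats 1000000

/-- The length (total weight) of a walk: the sum of its edge weights, with multiplicity. -/
def walkWeight {V : Type*} {G : SimpleGraph V} (w : V → V → ℝ) {u v : V} (p : G.Walk u v) : ℝ :=
  (p.darts.map (fun d => w d.toProd.1 d.toProd.2)).sum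

section basic
variable {V : Type*} [DecidableEq V] {G H K : SimpleGraph V} (w : V → V → ℝ)


@[simp] lemma walkWeight_nil {u : V} : walkWeight w (SimpleGraph.Walk.nil : G.Walk u u) = 0 := rfl

@[simp] lemma walkWeight_cons {u v x : V} (h : G.Adj u v) (p : G.Walk v x) :
    walkWeight w (SimpleGraph.Walk.cons h p) = w u v + walkWeight w p := by
  simp [walkWeight]

lemma walkWeight_append {u v x : V} (p : G.Walk u v) (q : G.Walk v x) :
    walkWeight w (p.append q) = walkWeight w p + walkWeight w q := by
  simp [walkWeight, SimpleGraph.Walk.darts_append]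

lemma walkWeight_transfer {u v : V} (p : G.Walk u v) (hp : ∀ e ∈ p.edges, e ∈ H.edgeSet) :
    walkWeight w (p.transfer H hp) = walkWeight w p := by
  induction p with
  | nil => rfl
  | cons h p ih =>
    rw [SimpleGraph.Walk.transfer, walkWeight_cons]
    exact (walkWeight_cons w _ _).trans (congrArg (w _ _ + ·) (ih _))

lemma walkWeight_nonneg (hw : ∀ u v, 0 ≤ w u v) {u v : V} (p : G.Walk u v) :
    0 ≤ walkWeight w p := by
  apply List.sum_nonneg
  intro a ha
  obtain ⟨d, _, rfl⟩ := List.mem_map.1 ha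
  exact hw _ _

/-- lift a walk along a subgraph relation -/
def liftW (h : H ≤ K) {u v : V} (p : H.Walk u v) : K.Walk u v :=
  p.transfer K (fun e he => SimpleGraph.edgeSet_mono h (p.edges_subset_edgeSet he))

@[simp] lemma liftW_support (h : H ≤ K) {u v : V} (p : H.Walk u v) :
    (liftW h p).support = p.support := by simp [liftW]

@[simp] lemma liftW_weight (h : H ≤ K) {u v : V} (p : H.Walk u v) :
    walkWeight w (liftW h p) = walkWeight w p := walkWeight_transfer w p _

lemma reach_of_mem_support {a b x : V} (p : G.Walk a b) (hx : x ∈ p.support) :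
    G.Reachable a x := ⟨p.takeUntil x hx⟩



/-- symmetric weight on edges -/
noncomputable def wE (hsymm : ∀ u v, w u v = w v u) : Sym2 V → ℝ :=
  Sym2.lift ⟨w, fun u v => (hsymm u v)⟩

@[simp] lemma wE_mk (hsymm : ∀ u v, w u v = w v u) (u v : V) :
    wE w hsymm s(u, v) = w u v := rfl

/-- total weight of a graph's (finite) edge set -/
noncomputable def gw [Fintype V] (hsymm : ∀ u v, w u v = w v u) (H : SimpleGraph V) : ℝ :=
  ∑ e ∈ (H.edgeSet.toFinite).toFinset, wE w hsymm e

variable {hsymm : ∀ u v, w u v = w v u}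

lemma wE_nonneg (hw : ∀ u v, 0 ≤ w u v) (hsymm : ∀ u v, w u v = w v u) (e : Sym2 V) :
    0 ≤ wE w hsymm e := by
  induction e with
  | _ u v => exact hw u v

lemma walkWeight_eq_edges_sum (hsymm : ∀ u v, w u v = w v u) {u v : V} (p : G.Walk u v) :
    walkWeight w p = (p.edges.map (wE w hsymm)).sum := by
  induction p with
  | nil => rfl
  | cons h p ih => simp [walkWeight, ih, walkWeight_eq_edges_sum] at *; simp [ih]

lemma list_sum_toFinset_le {α : Type*} [DecidableEq α] (f : α → ℝ) (hf : ∀ a, 0 ≤ f a)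
    (l : List α) : ∑ a ∈ l.toFinset, f a ≤ (l.map f).sum := by
  induction l with
  | nil => simp
  | cons a l ih =>
    rw [List.toFinset_cons, List.map_cons, List.sum_cons]
    by_cases ha : a ∈ l.toFinset
    · rw [Finset.insert_eq_self.2 ha]
      linarith [hf a]
    · rw [Finset.sum_insert ha]
      linarith

lemma list_nodup_sum_toFinset {α : Type*} [DecidableEq α] (f : α → ℝ) {l : List α}
    (h : l.Nodup) : ∑ a ∈ l.toFinset, f a = (l.map f).sum := by
  induction l with
  | nil => simp
  | cons a l ih =>
    rw [List.toFinset_cons, List.map_cons, List.sum_cons,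
      Finset.sum_insert (by simpa using (List.nodup_cons.1 h).1), ih (List.nodup_cons.1 h).2]

variable [Fintype V]

lemma gw_mono (hw : ∀ u v, 0 ≤ w u v) (hsymm : ∀ u v, w u v = w v u) {H K : SimpleGraph V} (h : H ≤ K) : gw w hsymm H ≤ gw w hsymm K := by
  apply Finset.sum_le_sum_of_subset_of_nonneg
  · intro e he
    simp only [Set.Finite.mem_toFinset] at he ⊢
    exact SimpleGraph.edgeSet_mono h he
  · intro e _ _
    exact wE_nonneg w hw hsymm e

lemma gw_nonneg (hw : ∀ u v, 0 ≤ w u v) (hsymm : ∀ u v, w u v = w v u) (H : SimpleGraph V) : 0 ≤ gw w hsymm H :=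
  Finset.sum_nonneg fun e _ => wE_nonneg w hw hsymm e

/-- a trail's weight is at most the total edge weight of the graph -/
lemma trail_weight_le_gw (hw : ∀ u v, 0 ≤ w u v) (hsymm : ∀ u v, w u v = w v u) {u v : V} {p : G.Walk u v} (hp : p.IsTrail) :
    walkWeight w p ≤ gw w hsymm G := by
  rw [walkWeight_eq_edges_sum w hsymm p,
    ← list_nodup_sum_toFinset (wE w hsymm) hp.edges_nodup]
  apply Finset.sum_le_sum_of_subset_of_nonneg
  · intro e he
    simp only [List.mem_toFinset] at he
    simpa using p.edges_subset_edgeSet he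
  · intro e _ _
    exact wE_nonneg w hw hsymm e

/-- total weight of the graph generated by the edges of a walk is at most the walk's weight -/
lemma gw_fromWalk_le (hw : ∀ u v, 0 ≤ w u v) (hsymm : ∀ u v, w u v = w v u) {u v : V} (p : G.Walk u v) :
    gw w hsymm (SimpleGraph.fromEdgeSet {e | e ∈ p.edges}) ≤ walkWeight w p := by
  rw [walkWeight_eq_edges_sum w hsymm p]
  calc ∑ e ∈ ((SimpleGraph.fromEdgeSet {e | e ∈ p.edges}).edgeSet.toFinite).toFinset, wE w hsymm e
      ≤ ∑ e ∈ p.edges.toFinset, wE w hsymm e := by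
        apply Finset.sum_le_sum_of_subset_of_nonneg
        · intro e he
          simp only [Set.Finite.mem_toFinset, SimpleGraph.edgeSet_fromEdgeSet,
            Set.mem_diff, Set.mem_setOf_eq, List.mem_toFinset] at he ⊢
          exact he.1
        · intro e _ _
          exact wE_nonneg w hw hsymm e
    _ ≤ (p.edges.map (wE w hsymm)).sum :=
        list_sum_toFinset_le _ (wE_nonneg w hw hsymm) _

end basic
section part3
variable {V : Type*} [DecidableEq V] {G H K : SimpleGraph V} (w : V → V → ℝ)

/-- splice a detour to a neighbor `u` into a walk at a support vertex `y` -/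
lemma exists_splice {a b y u : V} (q : H.Walk a b) (hy : y ∈ q.support) (hadj : H.Adj y u) :
    ∃ q' : H.Walk a b, (∀ x ∈ q.support, x ∈ q'.support) ∧ u ∈ q'.support ∧
      walkWeight w q' = walkWeight w q + w y u + w u y := by
  refine ⟨(q.takeUntil y hy).append ((SimpleGraph.Walk.cons hadj
    (SimpleGraph.Walk.cons hadj.symm SimpleGraph.Walk.nil)).append (q.dropUntil y hy)), ?_, ?_, ?_⟩
  · intro x hx
    rw [← q.take_spec hy, SimpleGraph.Walk.mem_support_append_iff] at hx
    rw [SimpleGraph.Walk.mem_support_append_iff, SimpleGraph.Walk.mem_support_append_iff]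
    tauto
  · rw [SimpleGraph.Walk.mem_support_append_iff, SimpleGraph.Walk.mem_support_append_iff]
    right; left
    simp
  · rw [walkWeight_append, walkWeight_append, walkWeight_cons, walkWeight_cons, walkWeight_nil]
    have hq : walkWeight w (q.takeUntil y hy) + walkWeight w (q.dropUntil y hy)
        = walkWeight w q := by
      rw [← walkWeight_append]
      exact congrArg (walkWeight w) (q.take_spec hy)
    linarith

/-- a walk from inside `P` to outside `P` contains a crossing dart -/
lemma exists_crossing {P : V → Prop} {a b : V} (p : G.Walk a b) (ha : P a) (hb : ¬ P b) :
    ∃ (u v : V) (huv : G.Adj u v) (q₁ : G.Walk a u) (q₂ : G.Walk v b),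
      P u ∧ ¬ P v ∧ walkWeight w p = walkWeight w q₁ + w u v + walkWeight w q₂ := by
  induction p with
  | nil => exact absurd ha hb
  | @cons a c b h p ih =>
    by_cases hc : P c
    · obtain ⟨u, v, huv, q₁, q₂, h1, h2, h3⟩ := ih hc hb
      refine ⟨u, v, huv, SimpleGraph.Walk.cons h q₁, q₂, h1, h2, ?_⟩
      rw [walkWeight_cons, walkWeight_cons, h3]
      ring
    · exact ⟨a, c, h, SimpleGraph.Walk.nil, p, ha, hc, by rw [walkWeight_cons, walkWeight_nil]; ring⟩

/-- deleting a single edge whose endpoints stay connected preserves reachability -/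
lemma reachable_deleteEdges_of_reachable {v w' : V}
    (hrew : (H.deleteEdges {s(v, w')}).Reachable v w') {a b : V} (hr : H.Reachable a b) :
    (H.deleteEdges {s(v, w')}).Reachable a b := by
  obtain ⟨p⟩ := hr
  induction p with
  | nil => rfl
  | @cons a c b h p ih =>
    refine SimpleGraph.Reachable.trans ?_ ih
    by_cases he : s(a, c) = s(v, w')
    · rw [Sym2.eq_iff] at he
      rcases he with ⟨rfl, rfl⟩ | ⟨rfl, rfl⟩
      · exact hrew
      · exact hrew.symm
    · exact (SimpleGraph.Adj.reachable (by rw [SimpleGraph.deleteEdges_adj]; exact ⟨h, by simpa using he⟩))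

/-- a subgraph of an acyclic graph is acyclic -/
lemma isAcyclic_of_le (hK : K.IsAcyclic) (h : H ≤ K) : H.IsAcyclic := by
  intro x c hc
  exact hK (liftW h c) (hc.transfer _)

end part3
section cover
variable {V : Type*} [DecidableEq V] [Fintype V]

lemma cover_walk (w : V → V → ℝ) (hw : ∀ u v, 0 ≤ w u v) (hsymm : ∀ u v, w u v = w v u) :
    ∀ (n : ℕ) (H : SimpleGraph V), H.IsAcyclic →
      ((H.edgeSet.toFinite).toFinset).card ≤ n →
      ∀ (s z : V) (p : H.Walk s z), p.IsPath →
      ∃ q : H.Walk s z, (∀ x, H.Reachable s x → x ∈ q.support) ∧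
        walkWeight w q + walkWeight w p ≤ 2 * gw w hsymm H := by
  classical
  intro n
  induction n with
  | zero =>
    intro H hacyc hcard s z p hp
    refine ⟨p, ?_, ?_⟩
    · intro x hx
      obtain ⟨q0⟩ := hx
      cases q0 with
      | nil => exact p.start_mem_support
      | cons h q =>
        exfalso
        have hne : ((H.edgeSet.toFinite).toFinset).Nonempty :=
          ⟨_, (H.edgeSet.toFinite).mem_toFinset.2 (H.mem_edgeSet.2 h)⟩
        have := Finset.card_pos.2 hne
        omega
    · have := trail_weight_le_gw w hw hsymm (G := H) hp.isTrail
      linarith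
  | succ n ih =>
    intro H hacyc hcard s z p hp
    by_cases hcov : ∀ x, H.Reachable s x → x ∈ p.support
    · refine ⟨p, hcov, ?_⟩
      have := trail_weight_le_gw w hw hsymm (G := H) hp.isTrail
      linarith
    · push_neg at hcov
      obtain ⟨x₀, hx₀r, hx₀p⟩ := hcov
      set S : Set V := {x | H.Reachable s x ∧ x ∉ p.support} with hS
      have hSne : S.Nonempty := ⟨x₀, hx₀r, hx₀p⟩
      -- canonical paths
      let π : ∀ (x : V), H.Reachable s x → H.Walk s x := fun x hx => hx.some.bypass
      have hπ : ∀ x hx, (π x hx).IsPath := fun x hx => SimpleGraph.Walk.bypass_isPath _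
      have huniq : ∀ (x) (hx : H.Reachable s x) (q : H.Walk s x), q.IsPath → q = π x hx := by
        intro x hx q hq
        exact congrArg Subtype.val
          (SimpleGraph.isAcyclic_iff_path_unique.1 hacyc (⟨q, hq⟩ : H.Path s x) ⟨π x hx, hπ x hx⟩)
      set F : V → ℕ := fun x => if hx : H.Reachable s x then (π x hx).length else 0 with hFdef
      have hF : ∀ (x) (hx : H.Reachable s x), F x = (π x hx).length := fun x hx => dif_pos hx
      obtain ⟨u, huS, humax⟩ := Set.exists_max_image S F S.toFinite hSne
      obtain ⟨hur, hup⟩ := huS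
      have hus : u ≠ s := fun h => hup (h ▸ p.start_mem_support)
      -- every neighbor of u lies on the canonical path to u
      have hnbr : ∀ v, H.Adj u v → v ∈ (π u hur).support := by
        intro v hv
        by_contra hvπ
        have hqpath : ((π u hur).concat hv).IsPath := by
          rw [← SimpleGraph.Walk.isPath_reverse_iff, SimpleGraph.Walk.reverse_concat,
            SimpleGraph.Walk.cons_isPath_iff]
          exact ⟨(SimpleGraph.Walk.isPath_reverse_iff _).2 (hπ _ _), by simpa using hvπ⟩
        have hvr : H.Reachable s v := hur.trans hv.reachable
        have h2 : ((π u hur).concat hv) = π v hvr := huniq v hvr _ hqpath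
        by_cases hvp : v ∈ p.support
        · have h1 : (p.takeUntil v hvp) = π v hvr := huniq v hvr _ (hp.takeUntil hvp)
          have hu_in : u ∈ (p.takeUntil v hvp).support := by
            rw [h1, ← h2, SimpleGraph.Walk.concat_eq_append,
              SimpleGraph.Walk.mem_support_append_iff]
            exact Or.inl (SimpleGraph.Walk.end_mem_support _)
          exact hup (p.support_takeUntil_subset hvp hu_in)
        · have := humax v ⟨hvr, hvp⟩
          rw [hF v hvr, ← h2, SimpleGraph.Walk.length_concat, hF u hur] at this
          omega
      -- a neighbor of u
      obtain ⟨y, hyu, rest, hrest⟩ :=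
        SimpleGraph.Walk.exists_eq_cons_of_ne hus ((π u hur).reverse)
      have hyadj : H.Adj y u := hyu.symm
      have hy_in : y ∈ (π u hur).support := hnbr y hyu
      have hyneu : y ≠ u := hyadj.ne
      set H' : SimpleGraph V := H.deleteEdges {e : Sym2 V | u ∈ e} with hH'def
      have hH'le : H' ≤ H := SimpleGraph.deleteEdges_le _
      have hH'acyc : H'.IsAcyclic := isAcyclic_of_le hacyc hH'le
      -- avoidance of u by canonical paths
      have havoid : ∀ (x) (hx : H.Reachable s x), x ≠ u → u ∉ (π x hx).support := by
        intro x hx hxu hu_in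
        have hq₁ : ((π x hx).takeUntil u hu_in).IsPath := (hπ x hx).takeUntil hu_in
        have hq₂path : ((π x hx).dropUntil u hu_in).IsPath := (hπ x hx).dropUntil hu_in
        obtain ⟨c, hc, rest₂, hq₂⟩ :=
          SimpleGraph.Walk.exists_eq_cons_of_ne (Ne.symm hxu) ((π x hx).dropUntil u hu_in)
        have hq₁u : (π x hx).takeUntil u hu_in = π u hur := huniq u hur _ hq₁
        have hcπ : c ∈ ((π x hx).takeUntil u hu_in).support := by
          rw [hq₁u]; exact hnbr c hc
        have hct : c ∈ ((π x hx).dropUntil u hu_in).support.tail := by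
          rw [hq₂]
          simp [SimpleGraph.Walk.support_cons]
        have hnd0 := (hπ x hx).support_nodup
        rw [← (π x hx).take_spec hu_in, SimpleGraph.Walk.support_append] at hnd0
        exact (List.nodup_append.1 hnd0).2.2 c hcπ c hct rfl
      have hreach' : ∀ x, H.Reachable s x → x ≠ u → H'.Reachable s x := by
        intro x hx hxu
        refine ⟨(π x hx).toDeleteEdges _ ?_⟩
        intro e he
        simp only [Set.mem_setOf_eq]
        intro hue
        obtain ⟨b, rfl⟩ := Sym2.mem_iff_exists.1 hue
        exact havoid x hx hxu ((π x hx).fst_mem_support_of_mem_edges he)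
      have hnu : ¬ H'.Reachable s u := by
        intro hr
        obtain ⟨q0⟩ := hr.symm
        cases q0 with
        | nil => exact hus rfl
        | cons h q =>
          rw [SimpleGraph.deleteEdges_adj] at h
          exact h.2 (Sym2.mem_mk_left _ _)
      -- edge counting
      have hemem : s(y, u) ∈ (H.edgeSet.toFinite).toFinset :=
        (H.edgeSet.toFinite).mem_toFinset.2 (H.mem_edgeSet.2 hyadj)
      have hemem' : s(y, u) ∉ (H'.edgeSet.toFinite).toFinset := by
        rw [Set.Finite.mem_toFinset, hH'def, SimpleGraph.edgeSet_deleteEdges]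
        intro hmem
        exact hmem.2 (Sym2.mem_mk_right _ _)
      have hsub : (H'.edgeSet.toFinite).toFinset ⊆ (H.edgeSet.toFinite).toFinset := by
        intro e he
        rw [Set.Finite.mem_toFinset] at he ⊢
        exact SimpleGraph.edgeSet_mono hH'le he
      have hcard' : ((H'.edgeSet.toFinite).toFinset).card ≤ n := by
        have hlt : ((H'.edgeSet.toFinite).toFinset).card
            < ((H.edgeSet.toFinite).toFinset).card :=
          Finset.card_lt_card ⟨hsub, fun hcontra => hemem' (hcontra hemem)⟩
        omega
      have hgw : gw w hsymm H' + w y u ≤ gw w hsymm H := by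
        have h1 : ∑ e ∈ insert s(y, u) ((H'.edgeSet.toFinite).toFinset), wE w hsymm e
            = wE w hsymm s(y, u) + gw w hsymm H' := Finset.sum_insert hemem'
        have h2 : ∑ e ∈ insert s(y, u) ((H'.edgeSet.toFinite).toFinset), wE w hsymm e
            ≤ gw w hsymm H := by
          apply Finset.sum_le_sum_of_subset_of_nonneg
          · intro e he
            rcases Finset.mem_insert.1 he with rfl | he
            · exact hemem
            · exact hsub he
          · intro e _ _
            exact wE_nonneg w hw hsymm e
        have h3 : wE w hsymm s(y, u) = w y u := rfl
        linarith
      -- transfer p to H'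
      have hupedges : ∀ e ∈ p.edges, e ∉ {e : Sym2 V | u ∈ e} := by
        intro e he
        simp only [Set.mem_setOf_eq]
        intro hue
        obtain ⟨b, rfl⟩ := Sym2.mem_iff_exists.1 hue
        exact hup (p.fst_mem_support_of_mem_edges he)
      have hp' : (p.toDeleteEdges _ hupedges).IsPath := hp.toDeleteEdges _ _ hupedges
      obtain ⟨q', hq'cov, hq'w⟩ := ih H' hH'acyc hcard' s z (p.toDeleteEdges _ hupedges) hp'
      have hyr : H.Reachable s y := reach_of_mem_support _ hy_in
      have hyr' : H'.Reachable s y := hreach' y hyr hyneu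
      have hy_in_q' : y ∈ q'.support := hq'cov y hyr'
      have hy_in_q'' : y ∈ (liftW hH'le q').support := by
        rw [liftW_support]; exact hy_in_q'
      obtain ⟨q, hqcov, huq, hqw⟩ := exists_splice w (liftW hH'le q') hy_in_q'' hyadj
      refine ⟨q, ?_, ?_⟩
      · intro x hx
        by_cases hxu : x = u
        · exact hxu ▸ huq
        · apply hqcov
          rw [liftW_support]
          exact hq'cov x (hreach' x hx hxu)
      · have hwq'' : walkWeight w (liftW hH'le q') = walkWeight w q' := liftW_weight w _ _
        have hwp' : walkWeight w (p.toDeleteEdges _ hupedges) = walkWeight w p :=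
          walkWeight_transfer w p _
        have huy : w u y = w y u := hsymm u y
        linarith
end cover
section mini
variable {V : Type*} [DecidableEq V] [Fintype V]

lemma exists_min_steiner (w : V → V → ℝ) (hw : ∀ u v, 0 ≤ w u v)
    (hsymm : ∀ u v, w u v = w v u) (G : SimpleGraph V) (hconn : G.Connected)
    {k : ℕ} (R : Fin k → Set V) (hR : ∀ i, (R i).Nonempty) (s : V) :
    ∃ H₀ : SimpleGraph V, H₀ ≤ G ∧ (∀ i, ∃ x ∈ R i, H₀.Reachable s x) ∧ H₀.IsAcyclic ∧
      (∀ u v, H₀.Adj u v → H₀.Reachable s u) ∧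
      (∀ H, H ≤ G → (∀ i, ∃ x ∈ R i, H.Reachable s x) → gw w hsymm H₀ ≤ gw w hsymm H) := by
  classical
  let P := {H : SimpleGraph V // H ≤ G ∧ ∀ i, ∃ x ∈ R i, H.Reachable s x}
  haveI : Nonempty P := ⟨⟨G, le_refl _, fun i => by
    obtain ⟨x, hx⟩ := hR i
    exact ⟨x, hx, hconn.preconnected s x⟩⟩⟩
  obtain ⟨H₀, hmin⟩ := Finite.exists_min
    (fun H : P => toLex (gw w hsymm H.1, ((H.1.edgeSet.toFinite).toFinset).card))
  have key : ∀ (H' : SimpleGraph V) (h1 : H' ≤ G) (h2 : ∀ i, ∃ x ∈ R i, H'.Reachable s x),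
      gw w hsymm H' ≤ gw w hsymm H₀.1 →
      ((H'.edgeSet.toFinite).toFinset).card < ((H₀.1.edgeSet.toFinite).toFinset).card →
      False := by
    intro H' h1 h2 hgle hclt
    have := hmin ⟨H', h1, h2⟩
    rw [Prod.Lex.le_iff] at this
    rcases this with h | ⟨heq, hle⟩
    · simp only [ofLex_toLex] at h
      linarith
    · simp only [ofLex_toLex] at heq hle
      omega
  have hwmin : ∀ H, H ≤ G → (∀ i, ∃ x ∈ R i, H.Reachable s x) →
      gw w hsymm H₀.1 ≤ gw w hsymm H := by
    intro H h1 h2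
    have := hmin ⟨H, h1, h2⟩
    rw [Prod.Lex.le_iff] at this
    rcases this with h | ⟨heq, _⟩
    · exact le_of_lt h
    · exact le_of_eq heq
  -- junk-free
  have hjunk : ∀ u v, H₀.1.Adj u v → H₀.1.Reachable s u := by
    intro u v huv
    by_contra hnr
    set H' := H₀.1.deleteEdges {s(u, v)} with hH'
    have h1 : H' ≤ G := le_trans (SimpleGraph.deleteEdges_le _) H₀.2.1
    have h2 : ∀ i, ∃ x ∈ R i, H'.Reachable s x := by
      intro i
      obtain ⟨x, hx, hr⟩ := H₀.2.2 i
      obtain ⟨q⟩ := hr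
      refine ⟨x, hx, ⟨q.toDeleteEdges _ ?_⟩⟩
      intro e he
      simp only [Set.mem_singleton_iff]
      rintro rfl
      exact hnr (reach_of_mem_support q (q.fst_mem_support_of_mem_edges he))
    refine key H' h1 h2 (gw_mono w hw hsymm (SimpleGraph.deleteEdges_le _)) ?_
    apply Finset.card_lt_card
    constructor
    · intro e he
      rw [Set.Finite.mem_toFinset] at he ⊢
      exact SimpleGraph.edgeSet_mono (SimpleGraph.deleteEdges_le _) he
    · intro hsub
      have hmem : s(u, v) ∈ (H₀.1.edgeSet.toFinite).toFinset :=
        (H₀.1.edgeSet.toFinite).mem_toFinset.2 (H₀.1.mem_edgeSet.2 huv)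
      have := hsub hmem
      rw [Set.Finite.mem_toFinset, hH', SimpleGraph.edgeSet_deleteEdges] at this
      exact this.2 rfl
  -- acyclic
  have hacyc : H₀.1.IsAcyclic := by
    intro x c hc
    obtain ⟨x₂, hadj, c', rfl⟩ : ∃ (x₂ : V) (hadj : H₀.1.Adj x x₂) (c' : H₀.1.Walk x₂ x),
        c = SimpleGraph.Walk.cons hadj c' := by
      cases c with
      | nil => exact absurd rfl hc.ne_nil
      | cons h q => exact ⟨_, h, q, rfl⟩
    have hmem : s(x, x₂) ∈ (SimpleGraph.Walk.cons hadj c').edges := by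
      rw [SimpleGraph.Walk.edges_cons]
      exact List.mem_cons_self
    have hrew := (SimpleGraph.adj_and_reachable_delete_edges_iff_exists_cycle.2
      ⟨x, SimpleGraph.Walk.cons hadj c', hc, hmem⟩).2
    set H' := H₀.1.deleteEdges {s(x, x₂)} with hH'
    have hrew' : H'.Reachable x x₂ := hrew
    have h1 : H' ≤ G := le_trans (SimpleGraph.deleteEdges_le _) H₀.2.1
    have h2 : ∀ i, ∃ x' ∈ R i, H'.Reachable s x' := by
      intro i
      obtain ⟨x', hx', hr⟩ := H₀.2.2 i
      exact ⟨x', hx', reachable_deleteEdges_of_reachable hrew' hr⟩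
    refine key H' h1 h2 (gw_mono w hw hsymm (SimpleGraph.deleteEdges_le _)) ?_
    apply Finset.card_lt_card
    constructor
    · intro e he
      rw [Set.Finite.mem_toFinset] at he ⊢
      exact SimpleGraph.edgeSet_mono (SimpleGraph.deleteEdges_le _) he
    · intro hsub
      have hmem2 : s(x, x₂) ∈ (H₀.1.edgeSet.toFinite).toFinset :=
        (H₀.1.edgeSet.toFinite).mem_toFinset.2 (H₀.1.mem_edgeSet.2 hadj)
      have := hsub hmem2
      rw [Set.Finite.mem_toFinset, hH', SimpleGraph.edgeSet_deleteEdges] at this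
      exact this.2 rfl
  exact ⟨H₀.1, H₀.2.1, H₀.2.2, hacyc, hjunk, hwmin⟩
end mini
section dijkstra
variable {V : Type*} [DecidableEq V] [Fintype V]

/-- distance from the set of `H₀`-reachable vertices, measured in `G` -/
noncomputable def distA (G H₀ : SimpleGraph V) (w : V → V → ℝ) (s b : V) : ℝ≥0∞ :=
  ⨅ (z : {x : V // H₀.Reachable s x}) (q : G.Walk z.1 b), ENNReal.ofReal (walkWeight w q)

lemma distA_le {G H₀ : SimpleGraph V} {w : V → V → ℝ} {s b z : V}
    (hz : H₀.Reachable s z) (q : G.Walk z b) :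
    distA G H₀ w s b ≤ ENNReal.ofReal (walkWeight w q) :=
  iInf_le_of_le ⟨z, hz⟩ (iInf_le _ q)

lemma dijkstra_extend (w : V → V → ℝ) (hw : ∀ u v, 0 ≤ w u v)
    (G : SimpleGraph V) (hconn : G.Connected) (s : V) (H₀ : SimpleGraph V) :
    ∀ (n : ℕ) (T : SimpleGraph V), H₀ ≤ T → T ≤ G → T.IsAcyclic →
      (∀ u v, T.Adj u v → T.Reachable s u) →
      (∀ b, T.Reachable s b → ∃ z, H₀.Reachable s z ∧ ∃ r : T.Walk z b,
          ENNReal.ofReal (walkWeight w r) ≤ distA G H₀ w s b) →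
      ({x : V | ¬ T.Reachable s x}).ncard ≤ n →
      ∃ T' : SimpleGraph V, H₀ ≤ T' ∧ T' ≤ G ∧ T'.IsAcyclic ∧ (∀ x, T'.Reachable s x) ∧
        (∀ b, ∃ z, H₀.Reachable s z ∧ ∃ r : T'.Walk z b,
          ENNReal.ofReal (walkWeight w r) ≤ distA G H₀ w s b) := by
  intro n
  induction n with
  | zero =>
    intro T hle₀ hleG hacyc hTedge hinv hn
    by_cases hall : ∀ x, T.Reachable s x
    · exact ⟨T, hle₀, hleG, hacyc, hall, fun b => hinv b (hall b)⟩
    · exfalso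
      push_neg at hall
      obtain ⟨x₀, hx₀⟩ := hall
      have : 0 < ({x : V | ¬ T.Reachable s x}).ncard :=
        (Set.ncard_pos (Set.toFinite _)).2 ⟨x₀, hx₀⟩
      omega
  | succ n ih =>
    intro T hle₀ hleG hacyc hTedge hinv hn
    by_cases hall : ∀ x, T.Reachable s x
    · exact ⟨T, hle₀, hleG, hacyc, hall, fun b => hinv b (hall b)⟩
    push_neg at hall
    obtain ⟨x₀, hx₀⟩ := hall
    set D : Set (V × V) := {d | G.Adj d.1 d.2 ∧ T.Reachable s d.1 ∧ ¬ T.Reachable s d.2} with hD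
    have hDne : D.Nonempty := by
      obtain ⟨p⟩ := hconn.preconnected s x₀
      obtain ⟨u, v, huv, q₁, q₂, hPu, hPv, _⟩ :=
        exists_crossing (P := T.Reachable s) w p (SimpleGraph.Reachable.refl s) hx₀
      exact ⟨(u, v), huv, hPu, hPv⟩
    obtain ⟨d₀, hd₀D, hd₀min⟩ := Set.exists_min_image D
      (fun d => distA G H₀ w s d.1 + ENNReal.ofReal (w d.1 d.2)) (Set.toFinite D) hDne
    obtain ⟨hu₀adj, hu₀r, hv₀r⟩ := hd₀D
    have hne : d₀.1 ≠ d₀.2 := hu₀adj.ne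
    set T' : SimpleGraph V := T ⊔ SimpleGraph.fromEdgeSet {s(d₀.1, d₀.2)} with hT'
    have hadj' : ∀ a b, T'.Adj a b ↔ T.Adj a b ∨ (s(a, b) = s(d₀.1, d₀.2) ∧ a ≠ b) := by
      intro a b
      rw [hT', SimpleGraph.sup_adj, SimpleGraph.fromEdgeSet_adj, Set.mem_singleton_iff]
    have hTT' : T ≤ T' := le_sup_left
    have hT'G : T' ≤ G := by
      refine sup_le hleG ?_
      intro a b hab
      rw [SimpleGraph.fromEdgeSet_adj, Set.mem_singleton_iff] at hab
      rcases Sym2.eq_iff.1 hab.1 with ⟨rfl, rfl⟩ | ⟨rfl, rfl⟩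
      · exact hu₀adj
      · exact hu₀adj.symm
    have hH₀T' : H₀ ≤ T' := le_trans hle₀ hTT'
    have hadj₀ : T'.Adj d₀.1 d₀.2 := (hadj' _ _).2 (Or.inr ⟨rfl, hne⟩)
    -- reach-set characterization
    have haux : ∀ (a b : V) (q : T'.Walk a b),
        (T.Reachable s a ∨ a = d₀.2) → (T.Reachable s b ∨ b = d₀.2) := by
      intro a b q
      induction q with
      | nil => exact id
      | @cons a c b h q ihq =>
        intro hst
        apply ihq
        rcases (hadj' a c).1 h with hT | ⟨he, _⟩
        · rcases hst with hra | rfl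
          · exact Or.inl (hra.trans hT.reachable)
          · exact Or.inl ((hTedge _ _ hT).trans hT.reachable)
        · rcases Sym2.eq_iff.1 he with ⟨rfl, rfl⟩ | ⟨rfl, rfl⟩
          · exact Or.inr rfl
          · exact Or.inl hu₀r
    have hchar : ∀ x, T'.Reachable s x ↔ (T.Reachable s x ∨ x = d₀.2) := by
      intro x
      constructor
      · intro ⟨q⟩
        exact haux s x q (Or.inl (SimpleGraph.Reachable.refl s))
      · rintro (h | rfl)
        · exact h.mono hTT'
        · exact ((hu₀r.mono hTT').trans hadj₀.reachable)
    -- acyclicity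
    have hacyc' : T'.IsAcyclic := by
      intro x c hc
      by_cases hce : s(d₀.1, d₀.2) ∈ c.edges
      · have hrw := ((SimpleGraph.adj_and_reachable_delete_edges_iff_exists_cycle (G := T')).2
          ⟨x, c, hc, hce⟩).2
        have hsd : T' \ SimpleGraph.fromEdgeSet {s(d₀.1, d₀.2)} ≤ T := by
          intro a b hab
          rcases hab with ⟨h1, h2⟩
          rcases (hadj' a b).1 h1 with hT | ⟨he, hne'⟩
          · exact hT
          · exact absurd (by
              rw [SimpleGraph.fromEdgeSet_adj, Set.mem_singleton_iff]
              exact ⟨he, hne'⟩) h2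
        have : T.Reachable s d₀.2 := hu₀r.trans (hrw.mono hsd)
        exact hv₀r this
      · have hedges : ∀ e ∈ c.edges, e ∈ T.edgeSet := by
          intro e he
          have := c.edges_subset_edgeSet he
          rw [hT', SimpleGraph.edgeSet_sup] at this
          rcases this with h | h
          · exact h
          · exfalso
            rw [SimpleGraph.edgeSet_fromEdgeSet] at h
            have : e = s(d₀.1, d₀.2) := h.1
            exact hce (this ▸ he)
        exact hacyc (c.transfer T hedges) (hc.transfer hedges)
    -- edge invariant
    have hTedge' : ∀ a b, T'.Adj a b → T'.Reachable s a := by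
      intro a b h
      rcases (hadj' a b).1 h with hT | ⟨he, _⟩
      · exact (hTedge _ _ hT).mono hTT'
      · rcases Sym2.eq_iff.1 he with ⟨rfl, rfl⟩ | ⟨rfl, rfl⟩
        · exact hu₀r.mono hTT'
        · exact (hchar _).2 (Or.inr rfl)
    -- Dijkstra key bound
    have hkey : distA G H₀ w s d₀.1 + ENNReal.ofReal (w d₀.1 d₀.2) ≤ distA G H₀ w s d₀.2 := by
      rw [distA]
      refine le_iInf fun z => le_iInf fun q => ?_
      have hPz : T.Reachable s z.1 := (z.2).mono hle₀
      obtain ⟨u, v, huv, q₁, q₂, hPu, hPv, hsum⟩ :=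
        exists_crossing (P := T.Reachable s) w q hPz hv₀r
      calc distA G H₀ w s d₀.1 + ENNReal.ofReal (w d₀.1 d₀.2)
          ≤ distA G H₀ w s u + ENNReal.ofReal (w u v) := hd₀min (u, v) ⟨huv, hPu, hPv⟩
        _ ≤ ENNReal.ofReal (walkWeight w q₁) + ENNReal.ofReal (w u v) :=
            add_le_add (distA_le z.2 q₁) le_rfl
        _ = ENNReal.ofReal (walkWeight w q₁ + w u v) :=
            (ENNReal.ofReal_add (walkWeight_nonneg w hw q₁) (hw u v)).symm
        _ ≤ ENNReal.ofReal (walkWeight w q) := by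
            apply ENNReal.ofReal_le_ofReal
            have := walkWeight_nonneg w hw q₂
            linarith
    -- new invariant
    have hinv' : ∀ b, T'.Reachable s b → ∃ z, H₀.Reachable s z ∧ ∃ r : T'.Walk z b,
        ENNReal.ofReal (walkWeight w r) ≤ distA G H₀ w s b := by
      intro b hb
      rcases (hchar b).1 hb with hbT | rfl
      · obtain ⟨z, hz, r, hr⟩ := hinv b hbT
        exact ⟨z, hz, liftW hTT' r, by rwa [liftW_weight]⟩
      · obtain ⟨z, hz, r, hr⟩ := hinv d₀.1 hu₀r
        refine ⟨z, hz, (liftW hTT' r).concat hadj₀, ?_⟩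
        have hwc : walkWeight w ((liftW hTT' r).concat hadj₀)
            = walkWeight w r + w d₀.1 d₀.2 := by
          rw [SimpleGraph.Walk.concat_eq_append, walkWeight_append, liftW_weight,
            walkWeight_cons, walkWeight_nil]
          ring
        rw [hwc]
        calc ENNReal.ofReal (walkWeight w r + w d₀.1 d₀.2)
            ≤ ENNReal.ofReal (walkWeight w r) + ENNReal.ofReal (w d₀.1 d₀.2) :=
              ENNReal.ofReal_add_le
          _ ≤ distA G H₀ w s d₀.1 + ENNReal.ofReal (w d₀.1 d₀.2) := add_le_add hr le_rfl
          _ ≤ distA G H₀ w s d₀.2 := hkey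
    -- measure decreases
    have hset : {x : V | ¬ T'.Reachable s x} = {x : V | ¬ T.Reachable s x} \ {d₀.2} := by
      ext x
      simp only [Set.mem_setOf_eq, Set.mem_diff, Set.mem_singleton_iff, hchar x]
      tauto
    have hmem : d₀.2 ∈ {x : V | ¬ T.Reachable s x} := hv₀r
    have hcard' : ({x : V | ¬ T'.Reachable s x}).ncard ≤ n := by
      rw [hset, Set.ncard_diff_singleton_of_mem hmem]
      have : 0 < ({x : V | ¬ T.Reachable s x}).ncard :=
        (Set.ncard_pos (Set.toFinite _)).2 ⟨d₀.2, hmem⟩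
      omega
    exact ih T' hH₀T' hT'G hacyc' hTedge' hinv' hcard'
end dijkstra


/-- A walk is a group Steiner path w.r.t. the groups `R` if it visits at least one
vertex of every group. -/
def IsGroupSteiner {V : Type*} {G : SimpleGraph V} {k : ℕ} (R : Fin k → Set V) {u v : V}
    (p : G.Walk u v) : Prop :=
  ∀ i, ∃ x ∈ R i, x ∈ p.support

/-- The group Steiner distance: the infimum of the lengths of group Steiner paths
from `s` to `t` (`∞` if there is none). -/
noncomputable def gsDist {V : Type*} (G : SimpleGraph V) (w : V → V → ℝ) {k : ℕ}
    (R : Fin k → Set V) (s t : V) : ℝ≥0∞ :=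
  ⨅ p : {p : G.Walk s t // IsGroupSteiner R p}, ENNReal.ofReal (walkWeight w p.1)

/-- The ordinary shortest-path distance: the infimum of the lengths of walks
from `s` to `t` (`∞` if there is none). -/
noncomputable def spDist {V : Type*} (G : SimpleGraph V) (w : V → V → ℝ) (s t : V) : ℝ≥0∞ :=
  ⨅ p : G.Walk s t, ENNReal.ofReal (walkWeight w p)

/-- For every source `s` there is a spanning tree of `G` (hence a
subgraph with exactly `n-1` edges) that is a single-source group Steiner spanner with
source `s` and stretch `3`. -/
theorem stmt_15 {V : Type*} [Fintype V] (G : SimpleGraph V) (hconn : G.Connected)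
    (w : V → V → ℝ) (hw : ∀ u v, 0 ≤ w u v) (hsymm : ∀ u v, w u v = w v u)
    {k : ℕ} (R : Fin k → Set V) (hR : ∀ i, (R i).Nonempty)
    (s : V) :
    ∃ T : SimpleGraph V, T ≤ G ∧ T.IsTree ∧ T.edgeSet.ncard = Fintype.card V - 1 ∧
      ∀ t : V, gsDist T w R s t ≤ 3 * gsDist G w R s t := by
    classical
  obtain ⟨H₀, hH₀G, hH₀R, hH₀acyc, hH₀junk, hH₀min⟩ :=
    exists_min_steiner w hw hsymm G hconn R hR s
  have hinv₀ : ∀ b, H₀.Reachable s b → ∃ z, H₀.Reachable s z ∧ ∃ r : H₀.Walk z b,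
      ENNReal.ofReal (walkWeight w r) ≤ distA G H₀ w s b := by
    intro b hb
    refine ⟨b, hb, SimpleGraph.Walk.nil, ?_⟩
    rw [walkWeight_nil]
    simp
  obtain ⟨T, hH₀T, hTG, hTacyc, hTreach, hTinv⟩ :=
    dijkstra_extend w hw G hconn s H₀ (({x : V | ¬ H₀.Reachable s x}).ncard) H₀
      le_rfl hH₀G hH₀acyc hH₀junk hinv₀ le_rfl
  have hTconn : T.Connected := by
    rw [SimpleGraph.connected_iff]
    exact ⟨fun x y => (hTreach x).symm.trans (hTreach y), ⟨s⟩⟩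
  have hTtree : T.IsTree := ⟨hTconn, hTacyc⟩
  refine ⟨T, hTG, hTtree, ?_, ?_⟩
  · haveI : Fintype T.edgeSet := (T.edgeSet.toFinite).fintype
    rw [Set.ncard_eq_toFinset_card']
    have h := hTtree.card_edgeFinset
    have he : T.edgeSet.toFinset = T.edgeFinset := rfl
    rw [he]
    omega
  · intro t
    rw [gsDist, gsDist, ENNReal.mul_iInf_of_ne (by norm_num) (by norm_num)]
    refine le_iInf fun pp => ?_
    obtain ⟨p, hpgs⟩ := pp
    -- minimality of H₀ against the graph generated by p
    have hHp : SimpleGraph.fromEdgeSet {e | e ∈ p.edges} ≤ G := by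
      refine le_trans (SimpleGraph.fromEdgeSet_mono ?_)
        (le_of_eq (SimpleGraph.fromEdgeSet_edgeSet G))
      intro e he
      exact p.edges_subset_edgeSet he
    have hedges : ∀ e ∈ p.edges, e ∈ (SimpleGraph.fromEdgeSet {e | e ∈ p.edges}).edgeSet := by
      intro e he
      rw [SimpleGraph.edgeSet_fromEdgeSet]
      exact ⟨he, SimpleGraph.not_isDiag_of_mem_edgeSet G (p.edges_subset_edgeSet he)⟩
    have hHpR : ∀ i, ∃ x ∈ R i, (SimpleGraph.fromEdgeSet {e | e ∈ p.edges}).Reachable s x := by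
      intro i
      obtain ⟨x, hx, hxs⟩ := hpgs i
      refine ⟨x, hx, ?_⟩
      have hx2 : x ∈ (p.transfer _ hedges).support := by
        rw [SimpleGraph.Walk.support_transfer]
        exact hxs
      exact reach_of_mem_support _ hx2
    have hgwle : gw w hsymm H₀ ≤ walkWeight w p :=
      le_trans (hH₀min _ hHp hHpR) (gw_fromWalk_le w hw hsymm p)
    obtain ⟨z, hz, r, hr⟩ := hTinv t
    obtain ⟨pz⟩ := hz
    obtain ⟨qc, hqccov, hqcw⟩ := cover_walk w hw hsymm ((H₀.edgeSet.toFinite).toFinset).card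
      H₀ hH₀acyc le_rfl s z pz.bypass (SimpleGraph.Walk.bypass_isPath pz)
    have hz' : H₀.Reachable s z := ⟨pz⟩
    set Q : T.Walk s t := (liftW hH₀T qc).append r with hQ
    have hQgs : IsGroupSteiner R Q := by
      intro i
      obtain ⟨x, hx, hxr⟩ := hH₀R i
      refine ⟨x, hx, ?_⟩
      rw [hQ, SimpleGraph.Walk.mem_support_append_iff]
      left
      rw [liftW_support]
      exact hqccov x hxr
    have hqcw' : walkWeight w qc ≤ 2 * gw w hsymm H₀ := by
      have := walkWeight_nonneg w hw pz.bypass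
      linarith
    have hdist_t : distA G H₀ w s t ≤ ENNReal.ofReal (walkWeight w p) :=
      distA_le (SimpleGraph.Reachable.refl s) p
    refine le_trans (iInf_le _ ⟨Q, hQgs⟩) ?_
    have hQw : walkWeight w Q = walkWeight w qc + walkWeight w r := by
      rw [hQ, walkWeight_append, liftW_weight]
    calc ENNReal.ofReal (walkWeight w Q)
        ≤ ENNReal.ofReal (walkWeight w qc) + ENNReal.ofReal (walkWeight w r) := by
          rw [hQw]
          exact ENNReal.ofReal_add_le
      _ ≤ ENNReal.ofReal (2 * walkWeight w p) + ENNReal.ofReal (walkWeight w p) := by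
          apply add_le_add
          · exact ENNReal.ofReal_le_ofReal (le_trans hqcw' (by linarith))
          · exact le_trans hr hdist_t
      _ = 3 * ENNReal.ofReal (walkWeight w p) := by
          rw [ENNReal.ofReal_mul (by norm_num : (0:ℝ) ≤ 2), ENNReal.ofReal_ofNat]
          ring
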